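/- Let ε > 0, 0 < g₁ ≤ g₂, 0 < δ̄ < c₁, τ > 0 with g₂·τ ≤ ε/(c₁ + 1)², and γ > 0. Let t_k = t₀ + k·τ, let g, δ : ℝ → ℝ be integrable on every bounded interval with g₁ ≤ g(s) ≤ g₂ and |δ(s)| ≤ δ̄ for all s ≥ t₀. Define recursively: u_k = −c₁·sign(x_k) if |x_k| > (c₁/(c₁+1))·ε, and u_k = −x_k/(ε − |x_k|) otherwise; and x_{k+1} = x_k + ∫_{t_k}^{t_{k+1}} g(s)·(δ(s) + u_k) ds. If |x₀| ≤ γ, then there exists a natural number l with l ≤ ⌊γ/(g₁·τ·(c₁ − δ̄))⌋ + 1 such that |x_k| ≤ (c₁/(c₁+1))·ε for all k ≥ l, and moreover limsup_{k→∞} |x_k| ≤ (δ̄/(δ̄+1))·ε. -/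

import Mathlib

open MeasureTheory intervalIntegral Filter

lemma aux14 (ε g₁ g₂ δb c₁ τ t₀ : ℝ)
    (hε : 0 < ε) (hg₁ : 0 < g₁) (hg₁₂ : g₁ ≤ g₂)
    (hδb : 0 < δb) (hδc : δb < c₁) (hτ : 0 < τ)
    (hsamp : g₂ * τ ≤ ε / (c₁ + 1) ^ 2)
    (g δ : ℝ → ℝ)
    (hg_int : ∀ a b : ℝ, IntervalIntegrable g volume a b)
    (hδ_int : ∀ a b : ℝ, IntervalIntegrable δ volume a b)
    (hg_bd : ∀ s : ℝ, t₀ ≤ s → g₁ ≤ g s ∧ g s ≤ g₂)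
    (hδ_bd : ∀ s : ℝ, t₀ ≤ s → |δ s| ≤ δb)
    (x u : ℕ → ℝ)
    (hu : ∀ k, u k = if (c₁ / (c₁ + 1)) * ε < |x k|
      then -c₁ * Real.sign (x k)
      else -(x k) / (ε - |x k|))
    (hx : ∀ k : ℕ, x (k + 1) =
      x k + ∫ s in (t₀ + (k : ℝ) * τ)..(t₀ + ((k : ℝ) + 1) * τ), g s * (δ s + u k))
    (k : ℕ) :
    ((c₁ / (c₁ + 1)) * ε < x k →
        x (k + 1) ≤ x k - g₁ * τ * (c₁ - δb) ∧ x k - g₂ * τ * (c₁ + δb) ≤ x (k + 1)) ∧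
    (0 ≤ x k → x k ≤ (δb / (δb + 1)) * ε → x (k + 1) ≤ (δb / (δb + 1)) * ε) ∧
    ((δb / (δb + 1)) * ε < x k → x k ≤ (c₁ / (c₁ + 1)) * ε →
        x (k + 1) ≤ x k - g₁ * τ * (x k / (ε - x k) - δb)) ∧
    (0 ≤ x k → x k ≤ (c₁ / (c₁ + 1)) * ε → -(g₂ * τ * δb) ≤ x (k + 1)) := by
  have hc₁ : 0 < c₁ := hδb.trans hδc
  have hc1 : (0:ℝ) < c₁ + 1 := by linarith
  have hd1 : (0:ℝ) < δb + 1 := by linarith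
  set B : ℝ := (c₁ / (c₁ + 1)) * ε with hB
  set B₂ : ℝ := (δb / (δb + 1)) * ε with hB₂
  clear_value B B₂
  have hBpos : 0 < B := by rw [hB]; positivity
  have hB₂pos : 0 < B₂ := by rw [hB₂]; positivity
  have hεB : ε - B = ε / (c₁ + 1) := by
    rw [hB, div_mul_eq_mul_div, sub_div' hc1.ne']; ring_nf
  have hεB₂ : ε - B₂ = ε / (δb + 1) := by
    rw [hB₂, div_mul_eq_mul_div, sub_div' hd1.ne']; ring_nf
  have hBlt : B < ε := by
    have : 0 < ε / (c₁ + 1) := by positivity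
    linarith [hεB]
  have hB₂B : B₂ < B := by
    rw [hB₂, hB, div_mul_eq_mul_div, div_mul_eq_mul_div,
      div_lt_div_iff₀ hd1 hc1]
    nlinarith
  have hsamp' : g₂ * τ * (c₁ + 1) ^ 2 ≤ ε := by
    rw [le_div_iff₀ (by positivity)] at hsamp; exact hsamp
  have hg₂ : 0 < g₂ := lt_of_lt_of_le hg₁ hg₁₂
  have hgτ : 0 < g₂ * τ := mul_pos hg₂ hτ
  -- the interval endpoints
  set a : ℝ := t₀ + (k : ℝ) * τ with ha
  set b : ℝ := t₀ + ((k : ℝ) + 1) * τ with hb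
  clear_value a b
  have hab : a ≤ b := by rw [ha, hb]; nlinarith
  have hba : b - a = τ := by rw [ha, hb]; ring
  have ht₀a : t₀ ≤ a := by
    have : (0:ℝ) ≤ (k : ℝ) * τ := by positivity
    rw [ha]; linarith
  -- integrability of the integrand
  have hgδ_int : IntervalIntegrable (fun s => g s * δ s) volume a b := by
    rw [intervalIntegrable_iff, Set.uIoc_of_le hab]
    refine Integrable.bdd_mul (c := g₂) ((hδ_int a b).1) ((hg_int a b).1.aestronglyMeasurable) ?_
    refine (ae_restrict_iff' measurableSet_Ioc).2 (ae_of_all _ fun s hs => ?_)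
    have hts : t₀ ≤ s := ht₀a.trans hs.1.le
    have := hg_bd s hts
    rw [Real.norm_eq_abs, abs_le]
    constructor <;> linarith
  have hInt : IntervalIntegrable (fun s => g s * (δ s + u k)) volume a b := by
    have he : (fun s => g s * (δ s + u k)) = fun s => g s * δ s + u k * g s := by
      funext s; ring
    rw [he]
    exact hgδ_int.add ((hg_int a b).const_mul (u k))
  -- integral bounds from pointwise bounds
  have hIub : ∀ C : ℝ, (∀ s : ℝ, t₀ ≤ s → g s * (δ s + u k) ≤ C) →
      (∫ s in a..b, g s * (δ s + u k)) ≤ τ * C := by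
    intro C hC
    have h := intervalIntegral.integral_mono_on hab hInt intervalIntegrable_const
      (fun s hs => hC s (ht₀a.trans hs.1))
    rwa [intervalIntegral.integral_const, hba, smul_eq_mul] at h
  have hIlb : ∀ C : ℝ, (∀ s : ℝ, t₀ ≤ s → C ≤ g s * (δ s + u k)) →
      τ * C ≤ (∫ s in a..b, g s * (δ s + u k)) := by
    intro C hC
    have h := intervalIntegral.integral_mono_on hab intervalIntegrable_const hInt
      (fun s hs => hC s (ht₀a.trans hs.1))
    rwa [intervalIntegral.integral_const, hba, smul_eq_mul] at h
  have hxk1 : x (k + 1) = x k + ∫ s in a..b, g s * (δ s + u k) := by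
    rw [ha, hb]; exact hx k
  refine ⟨?_, ?_, ?_, ?_⟩
  · -- outside: B < x k
    intro hxk
    have hxpos : 0 < x k := hBpos.trans hxk
    have habs : |x k| = x k := abs_of_pos hxpos
    have huk : u k = -c₁ := by
      rw [hu k, if_pos (by rwa [habs]), Real.sign_of_pos hxpos, mul_one]
    constructor
    · have h := hIub (g₁ * (δb - c₁)) ?_
      · have hr : τ * (g₁ * (δb - c₁)) = -(g₁ * τ * (c₁ - δb)) := by ring
        rw [hxk1]; linarith
      · intro s hs
        have hgs := hg_bd s hs
        have hδs := abs_le.mp (hδ_bd s hs)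
        rw [huk]
        have h1 : g s * (δ s + -c₁) ≤ g₁ * (δ s + -c₁) :=
          mul_le_mul_of_nonpos_right hgs.1 (by linarith)
        have h2 : g₁ * (δ s + -c₁) ≤ g₁ * (δb - c₁) :=
          mul_le_mul_of_nonneg_left (by linarith) hg₁.le
        linarith
    · have h := hIlb (g₂ * (-δb - c₁)) ?_
      · have hr : τ * (g₂ * (-δb - c₁)) = -(g₂ * τ * (c₁ + δb)) := by ring
        rw [hxk1]; linarith
      · intro s hs
        have hgs := hg_bd s hs
        have hδs := abs_le.mp (hδ_bd s hs)
        rw [huk]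
        have h1 : g₂ * (δ s + -c₁) ≤ g s * (δ s + -c₁) :=
          mul_le_mul_of_nonpos_right hgs.2 (by linarith)
        have h2 : g₂ * (-δb - c₁) ≤ g₂ * (δ s + -c₁) :=
          mul_le_mul_of_nonneg_left (by linarith) hg₂.le
        linarith
  · -- inside, deep region: 0 ≤ x k ≤ B₂
    intro hx0 hxk2
    have habs : |x k| = x k := abs_of_nonneg hx0
    have huk : u k = -x k / (ε - x k) := by
      rw [hu k, if_neg (by rw [habs]; exact not_lt.2 (hxk2.trans hB₂B.le)), habs]
    set q : ℝ := ε - x k with hqdef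
    clear_value q
    have hq : 0 < q := by rw [hqdef]; linarith
    have hBid : (δb + 1) * B₂ = δb * ε := by
      rw [hB₂]; field_simp
    have hδbu : 0 ≤ δb + u k := by
      have hxdb : x k * (δb + 1) ≤ δb * ε := by
        have h := hxk2
        rw [hB₂, div_mul_eq_mul_div, le_div_iff₀ hd1] at h
        linarith
      have hxq : x k ≤ δb * q := by rw [hqdef]; nlinarith [hxdb]
      rw [huk, neg_div]
      have : x k / q ≤ δb := (div_le_iff₀ hq).2 (by linarith)
      linarith
    have h := hIub (g₂ * (δb + u k)) ?_
    swap
    · intro s hs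
      have hgs := hg_bd s hs
      have hδs := abs_le.mp (hδ_bd s hs)
      rcases le_or_gt 0 (δ s + u k) with hpos | hneg
      · have h1 : g s * (δ s + u k) ≤ g₂ * (δ s + u k) :=
          mul_le_mul_of_nonneg_right hgs.2 hpos
        have h2 : g₂ * (δ s + u k) ≤ g₂ * (δb + u k) :=
          mul_le_mul_of_nonneg_left (by linarith) hg₂.le
        linarith
      · have h1 : g s * (δ s + u k) ≤ g₁ * (δ s + u k) :=
          mul_le_mul_of_nonpos_right hgs.1 hneg.le
        have h2 : g₁ * (δ s + u k) ≤ g₁ * (δb + u k) :=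
          mul_le_mul_of_nonneg_left (by linarith) hg₁.le
        have h3 : g₁ * (δb + u k) ≤ g₂ * (δb + u k) :=
          mul_le_mul_of_nonneg_right hg₁₂ hδbu
        linarith
    · -- conclude x (k+1) ≤ B₂
      have hqB : ε ≤ q * (c₁ + 1) := by
        have h1 : ε / (c₁ + 1) ≤ q := by
          rw [← hεB, hqdef]; have := hxk2.trans hB₂B.le; linarith
        exact (div_le_iff₀ hc1).mp h1
      have hq_big : g₂ * τ * (δb + 1) ≤ q := by
        have h' : g₂ * τ * (δb + 1) ≤ g₂ * τ * (c₁ + 1) :=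
          mul_le_mul_of_nonneg_left (by linarith) hgτ.le
        have e0 : g₂ * τ * (δb + 1) * (c₁ + 1) ≤ g₂ * τ * (c₁ + 1) ^ 2 := by
          calc g₂ * τ * (δb + 1) * (c₁ + 1) ≤ g₂ * τ * (c₁ + 1) * (c₁ + 1) :=
                mul_le_mul_of_nonneg_right h' hc1.le
            _ = g₂ * τ * (c₁ + 1) ^ 2 := by ring
        exact le_of_mul_le_mul_right (by linarith [e0, hsamp', hqB]) hc1
      have h0 : (δb + u k) * q = δb * q - x k := by
        rw [huk, add_mul, neg_div, neg_mul, div_mul_cancel₀ _ hq.ne']; ring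
      have hexp : (δb + u k) * q = (δb + 1) * (B₂ - x k) := by
        rw [h0, hqdef]; linear_combination -hBid
      have hBx : 0 ≤ B₂ - x k := by linarith
      have hmulq : τ * (g₂ * (δb + u k)) * q = τ * g₂ * ((δb + 1) * (B₂ - x k)) := by
        have : τ * (g₂ * (δb + u k)) * q = τ * g₂ * ((δb + u k) * q) := by ring
        rw [this, hexp]
      have hfin : τ * (g₂ * (δb + u k)) * q ≤ (B₂ - x k) * q := by
        rw [hmulq]
        have e2 : (B₂ - x k) * (g₂ * τ * (δb + 1)) ≤ (B₂ - x k) * q :=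
          mul_le_mul_of_nonneg_left hq_big hBx
        linarith [e2, show τ * g₂ * ((δb + 1) * (B₂ - x k)) = (B₂ - x k) * (g₂ * τ * (δb + 1)) from by ring]
      have := le_of_mul_le_mul_right hfin hq
      rw [hxk1]; linarith
  · -- inside, annulus: B₂ < x k ≤ B
    intro hxk2 hxkB
    have hxpos : 0 < x k := hB₂pos.trans hxk2
    have habs : |x k| = x k := abs_of_pos hxpos
    have huk : u k = -x k / (ε - x k) := by
      rw [hu k, if_neg (by rw [habs]; exact not_lt.2 hxkB), habs]
    set q : ℝ := ε - x k with hqdef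
    clear_value q
    have hq : 0 < q := by rw [hqdef]; linarith
    have hBid : (δb + 1) * B₂ = δb * ε := by
      rw [hB₂]; field_simp
    have hδbu : δb + u k ≤ 0 := by
      have hxB : (δb + 1) * B₂ ≤ (δb + 1) * x k :=
        mul_le_mul_of_nonneg_left hxk2.le hd1.le
      have hxq : δb * q ≤ x k := by rw [hqdef]; linarith [hBid, hxB]
      rw [huk, neg_div]
      have : δb ≤ x k / q := (le_div_iff₀ hq).2 (by linarith)
      linarith
    have h := hIub (g₁ * (δb + u k)) ?_
    swap
    · intro s hs
      have hgs := hg_bd s hs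
      have hδs := abs_le.mp (hδ_bd s hs)
      have h1 : g s * (δ s + u k) ≤ g₁ * (δ s + u k) :=
        mul_le_mul_of_nonpos_right hgs.1 (by linarith)
      have h2 : g₁ * (δ s + u k) ≤ g₁ * (δb + u k) :=
        mul_le_mul_of_nonneg_left (by linarith) hg₁.le
      linarith
    · have hr : τ * (g₁ * (δb + u k)) = -(g₁ * τ * (x k / q - δb)) := by
        rw [huk]; ring
      rw [hxk1]; linarith
  · -- lower bound inside: 0 ≤ x k ≤ B
    intro hx0 hxkB
    have habs : |x k| = x k := abs_of_nonneg hx0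
    have huk : u k = -x k / (ε - x k) := by
      rw [hu k, if_neg (by rw [habs]; exact not_lt.2 hxkB), habs]
    set q : ℝ := ε - x k with hqdef
    clear_value q
    have hq : 0 < q := by rw [hqdef]; linarith
    have hquot : 0 ≤ x k / q := by positivity
    have hukneg : u k ≤ 0 := by rw [huk, neg_div]; linarith
    have h := hIlb (g₂ * (u k - δb)) ?_
    swap
    · intro s hs
      have hgs := hg_bd s hs
      have hδs := abs_le.mp (hδ_bd s hs)
      rcases le_or_gt 0 (δ s + u k) with hpos | hneg
      · have h1 : 0 ≤ g s * (δ s + u k) := mul_nonneg (by linarith [hgs.1]) hpos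
        have h2 : g₂ * (u k - δb) ≤ 0 := mul_nonpos_of_nonneg_of_nonpos hg₂.le (by linarith)
        linarith
      · have h1 : g₂ * (δ s + u k) ≤ g s * (δ s + u k) :=
          mul_le_mul_of_nonpos_right hgs.2 hneg.le
        have h2 : g₂ * (u k - δb) ≤ g₂ * (δ s + u k) :=
          mul_le_mul_of_nonneg_left (by linarith) hg₂.le
        linarith
    · have hqB : ε ≤ q * (c₁ + 1) := by
        have h1 : ε / (c₁ + 1) ≤ q := by rw [← hεB, hqdef]; linarith
        exact (div_le_iff₀ hc1).mp h1
      have hq2 : g₂ * τ ≤ q := by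
        have h1 : (1:ℝ) ≤ c₁ + 1 := by linarith
        have e0 : g₂ * τ * (c₁ + 1) ≤ g₂ * τ * (c₁ + 1) ^ 2 := by
          calc g₂ * τ * (c₁ + 1) = g₂ * τ * (c₁ + 1) * 1 := by ring
            _ ≤ g₂ * τ * (c₁ + 1) * (c₁ + 1) :=
                mul_le_mul_of_nonneg_left h1 (mul_pos hgτ hc1).le
            _ = g₂ * τ * (c₁ + 1) ^ 2 := by ring
        exact le_of_mul_le_mul_right (by linarith [e0, hsamp', hqB]) hc1
      have h5 : g₂ * τ * (x k / q) ≤ x k := by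
        calc g₂ * τ * (x k / q) ≤ q * (x k / q) :=
              mul_le_mul_of_nonneg_right hq2 hquot
          _ = x k := by rw [mul_comm, div_mul_cancel₀ _ hq.ne']
      have hr : τ * (g₂ * (u k - δb)) = -(g₂ * τ * (x k / q)) - g₂ * τ * δb := by
        rw [huk]; ring
      rw [hxk1]; linarith

lemma sign_neg' (y : ℝ) : Real.sign (-y) = - Real.sign y := by
  rcases lt_trichotomy y 0 with h | h | h
  · rw [Real.sign_of_neg h, Real.sign_of_pos (by linarith : (0:ℝ) < -y)]; ring
  · simp [h]
  · rw [Real.sign_of_pos h, Real.sign_of_neg (by linarith : -y < 0)]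

set_option maxHeartbeats 2000000 in
theorem stmt_14 (ε g₁ g₂ δb c₁ τ t₀ γ : ℝ)
    (hε : 0 < ε) (hg₁ : 0 < g₁) (hg₁₂ : g₁ ≤ g₂)
    (hδb : 0 < δb) (hδc : δb < c₁) (hτ : 0 < τ)
    (hsamp : g₂ * τ ≤ ε / (c₁ + 1) ^ 2) (hγ : 0 < γ)
    (g δ : ℝ → ℝ)
    (hg_int : ∀ a b : ℝ, IntervalIntegrable g volume a b)
    (hδ_int : ∀ a b : ℝ, IntervalIntegrable δ volume a b)
    (hg_bd : ∀ s : ℝ, t₀ ≤ s → g₁ ≤ g s ∧ g s ≤ g₂)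
    (hδ_bd : ∀ s : ℝ, t₀ ≤ s → |δ s| ≤ δb)
    (x u : ℕ → ℝ)
    (hu : ∀ k, u k = if (c₁ / (c₁ + 1)) * ε < |x k|
      then -c₁ * Real.sign (x k)
      else -(x k) / (ε - |x k|))
    (hx : ∀ k : ℕ, x (k + 1) =
      x k + ∫ s in (t₀ + (k : ℝ) * τ)..(t₀ + ((k : ℝ) + 1) * τ), g s * (δ s + u k))
    (hx₀ : |x 0| ≤ γ) :
    (∃ l : ℕ, l ≤ ⌊γ / (g₁ * τ * (c₁ - δb))⌋₊ + 1 ∧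
      ∀ k : ℕ, l ≤ k → |x k| ≤ (c₁ / (c₁ + 1)) * ε) ∧
    limsup (fun k : ℕ => |x k|) atTop ≤ (δb / (δb + 1)) * ε := by
  have hc₁ : 0 < c₁ := hδb.trans hδc
  have hc1 : (0:ℝ) < c₁ + 1 := by linarith
  have hd1 : (0:ℝ) < δb + 1 := by linarith
  have hg₂ : 0 < g₂ := lt_of_lt_of_le hg₁ hg₁₂
  -- the two instances of the one-step lemma
  have hP := aux14 ε g₁ g₂ δb c₁ τ t₀ hε hg₁ hg₁₂ hδb hδc hτ hsamp g δ
    hg_int hδ_int hg_bd hδ_bd x u hu hx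
  have huN : ∀ k, (fun k => -u k) k = if (c₁ / (c₁ + 1)) * ε < |(fun k => -x k) k|
      then -c₁ * Real.sign ((fun k => -x k) k)
      else -((fun k => -x k) k) / (ε - |(fun k => -x k) k|) := by
    intro k
    simp only [abs_neg]
    rw [hu k]
    split_ifs with h
    · rw [sign_neg']; ring
    · ring
  have hxN : ∀ k : ℕ, (fun k => -x k) (k + 1) =
      (fun k => -x k) k + ∫ s in (t₀ + (k : ℝ) * τ)..(t₀ + ((k : ℝ) + 1) * τ),
        g s * ((fun s => -δ s) s + (fun k => -u k) k) := by
    intro k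
    simp only
    have he : (fun s => g s * (-δ s + -u k)) = fun s => -(g s * (δ s + u k)) := by
      funext s; ring
    rw [hx k, he, intervalIntegral.integral_neg]
    ring
  have hN := aux14 ε g₁ g₂ δb c₁ τ t₀ hε hg₁ hg₁₂ hδb hδc hτ hsamp g (fun s => -δ s)
    hg_int (fun a b => (hδ_int a b).neg) hg_bd
    (fun s hs => by rw [abs_neg]; exact hδ_bd s hs)
    (fun k => -x k) (fun k => -u k) huN hxN
  have hN' : ∀ k : ℕ,
      ((c₁ / (c₁ + 1)) * ε < -x k →
        -x (k + 1) ≤ -x k - g₁ * τ * (c₁ - δb) ∧ -x k - g₂ * τ * (c₁ + δb) ≤ -x (k + 1)) ∧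
      (0 ≤ -x k → -x k ≤ (δb / (δb + 1)) * ε → -x (k + 1) ≤ (δb / (δb + 1)) * ε) ∧
      ((δb / (δb + 1)) * ε < -x k → -x k ≤ (c₁ / (c₁ + 1)) * ε →
        -x (k + 1) ≤ -x k - g₁ * τ * (-x k / (ε - -x k) - δb)) ∧
      (0 ≤ -x k → -x k ≤ (c₁ / (c₁ + 1)) * ε → -(g₂ * τ * δb) ≤ -x (k + 1)) := hN
  clear hN huN hxN
  -- abbreviations
  set B : ℝ := (c₁ / (c₁ + 1)) * ε with hB
  set B₂ : ℝ := (δb / (δb + 1)) * ε with hB₂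
  set Δ : ℝ := g₁ * τ * (c₁ - δb) with hΔdef
  clear_value B B₂ Δ
  have hΔ : 0 < Δ := by
    rw [hΔdef]; exact mul_pos (mul_pos hg₁ hτ) (by linarith)
  have hBpos : 0 < B := by rw [hB]; positivity
  have hB₂pos : 0 < B₂ := by rw [hB₂]; positivity
  have hεB : ε - B = ε / (c₁ + 1) := by
    rw [hB, div_mul_eq_mul_div, sub_div' hc1.ne']; ring_nf
  have hBlt : B < ε := by
    have : 0 < ε / (c₁ + 1) := by positivity
    linarith [hεB]
  have hB₂B : B₂ < B := by
    rw [hB₂, hB, div_mul_eq_mul_div, div_mul_eq_mul_div, div_lt_div_iff₀ hd1 hc1]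
    nlinarith
  have hBid : (δb + 1) * B₂ = δb * ε := by rw [hB₂]; field_simp
  have hr : g₂ * τ ≤ ε / (c₁ + 1) := by
    refine hsamp.trans ?_
    refine div_le_div_of_nonneg_left hε.le hc1 ?_
    nlinarith
  have hr2 : g₂ * τ ≤ ε / (δb + 1) := by
    refine hsamp.trans ?_
    refine div_le_div_of_nonneg_left hε.le hd1 ?_
    nlinarith
  have h2B : g₂ * τ * (c₁ + δb) ≤ 2 * B := by
    rw [hB]
    calc g₂ * τ * (c₁ + δb) ≤ (ε / (c₁ + 1)) * (c₁ + δb) :=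
          mul_le_mul_of_nonneg_right hr (by linarith)
      _ ≤ (ε / (c₁ + 1)) * (2 * c₁) :=
          mul_le_mul_of_nonneg_left (by linarith) (by positivity)
      _ = 2 * (c₁ / (c₁ + 1) * ε) := by ring
  have hgτδ : g₂ * τ * δb ≤ B₂ := by
    rw [hB₂]
    calc g₂ * τ * δb ≤ (ε / (δb + 1)) * δb := mul_le_mul_of_nonneg_right hr2 hδb.le
      _ = δb / (δb + 1) * ε := by ring
  -- monotonicity of t ↦ t/(ε-t)
  have hmono : ∀ s t : ℝ, 0 ≤ s → s ≤ t → t ≤ B → s / (ε - s) ≤ t / (ε - t) := by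
    intro s t hs hst htB
    have h1 : 0 < ε - t := by linarith
    have h2 : 0 < ε - s := by linarith
    rw [div_le_div_iff₀ h2 h1]
    nlinarith [mul_le_mul_of_nonneg_right hst hε.le]
  have hdlb : ∀ t : ℝ, B₂ ≤ t → t ≤ B → δb ≤ t / (ε - t) := by
    intro t h1 h2
    have hq : 0 < ε - t := by linarith
    rw [le_div_iff₀ hq]
    nlinarith [hBid, mul_le_mul_of_nonneg_left h1 hd1.le]
  -- one-step estimate outside
  have stepO : ∀ k, B < |x k| → |x (k + 1)| ≤ max B (|x k| - Δ) := by
    intro k hk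
    rcases abs_cases (x k) with ⟨he, hsg⟩ | ⟨he, hsg⟩
    · rw [he] at hk ⊢
      have hx1 := (hP k).1 hk
      rw [abs_le]
      constructor
      · have : -B ≤ x (k + 1) := by linarith [hx1.2]
        linarith [le_max_left B (x k - Δ)]
      · exact hx1.1.trans (le_max_right _ _)
    · rw [he] at hk ⊢
      have hx1 := (hN' k).1 hk
      rw [abs_le]
      constructor
      · have h4 := le_max_right B (-x k - Δ)
        linarith [hx1.1]
      · have h5 : -B ≤ -x (k + 1) := by linarith [hx1.2]
        have h4 := le_max_left B (-x k - Δ)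
        linarith
  -- one-step estimate inside
  have stepI : ∀ k, |x k| ≤ B → |x (k + 1)| ≤ B ∧
      (|x k| ≤ B₂ → |x (k + 1)| ≤ B₂) ∧
      (B₂ < |x k| → |x (k + 1)| ≤ max B₂ (|x k| - g₁ * τ * (|x k| / (ε - |x k|) - δb))) := by
    intro k hk
    rcases le_or_gt 0 (x k) with h0 | h0
    · have habs : |x k| = x k := abs_of_nonneg h0
      rw [habs] at hk ⊢
      have hlow : -(g₂ * τ * δb) ≤ x (k + 1) := (hP k).2.2.2 h0 hk
      have hlowB₂ : -B₂ ≤ x (k + 1) := by linarith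
      rcases le_or_gt (x k) B₂ with h2 | h2
      · have hup : x (k + 1) ≤ B₂ := (hP k).2.1 h0 h2
        exact ⟨abs_le.2 ⟨by linarith, by linarith⟩,
          fun _ => abs_le.2 ⟨hlowB₂, hup⟩,
          fun hc => absurd hc (not_lt.2 h2)⟩
      · have hup := (hP k).2.2.1 h2 hk
        have hd0 : 0 ≤ g₁ * τ * (x k / (ε - x k) - δb) := by
          have := hdlb (x k) h2.le hk
          have hgt : 0 ≤ g₁ * τ := by positivity
          nlinarith
        refine ⟨abs_le.2 ⟨by linarith, by linarith⟩,
          fun hc => absurd h2 (not_lt.2 hc), fun _ => ?_⟩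
        refine abs_le.2 ⟨?_, hup.trans (le_max_right _ _)⟩
        have := le_max_left B₂ (x k - g₁ * τ * (x k / (ε - x k) - δb))
        linarith
    · have habs : |x k| = -x k := abs_of_neg h0
      rw [habs] at hk ⊢
      have h0' : 0 ≤ -x k := by linarith
      have hlow : -(g₂ * τ * δb) ≤ -x (k + 1) := (hN' k).2.2.2 h0' hk
      have hlowB₂ : -B₂ ≤ -x (k + 1) := by linarith
      rcases le_or_gt (-x k) B₂ with h2 | h2
      · have hup : -x (k + 1) ≤ B₂ := (hN' k).2.1 h0' h2
        exact ⟨abs_le.2 ⟨by linarith, by linarith⟩,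
          fun _ => abs_le.2 ⟨by linarith, by linarith⟩,
          fun hc => absurd hc (not_lt.2 h2)⟩
      · have hup := (hN' k).2.2.1 h2 hk
        rw [show ε - -x k = ε - -x k from rfl] at hup
        have hd0 : 0 ≤ g₁ * τ * (-x k / (ε - -x k) - δb) := by
          have := hdlb (-x k) h2.le hk
          have hgt : 0 ≤ g₁ * τ := by positivity
          nlinarith
        refine ⟨abs_le.2 ⟨by linarith, by linarith⟩,
          fun hc => absurd h2 (not_lt.2 hc), fun _ => ?_⟩
        refine abs_le.2 ⟨?_, ?_⟩
        · have := le_max_right B₂ (-x k - g₁ * τ * (-x k / (ε - -x k) - δb))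
          linarith
        · have := le_max_left B₂ (-x k - g₁ * τ * (-x k / (ε - -x k) - δb))
          linarith
  -- reaching phase
  have main1 : ∀ k : ℕ, |x k| ≤ B ∨ |x k| ≤ γ - k * Δ := by
    intro k
    induction k with
    | zero => exact Or.inr (by simpa using hx₀)
    | succ n ih =>
      rcases ih with h | h
      · exact Or.inl (stepI n h).1
      · rcases le_or_gt (|x n|) B with hBn | hBn
        · exact Or.inl (stepI n hBn).1
        · have h2 := stepO n hBn
          rcases le_total (|x n| - Δ) B with hm | hm
          · rw [max_eq_left hm] at h2
            exact Or.inl h2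
          · rw [max_eq_right hm] at h2
            refine Or.inr ?_
            push_cast
            linarith
  set l : ℕ := ⌊γ / Δ⌋₊ + 1 with hl
  have hlγ : ∀ k : ℕ, l ≤ k → |x k| ≤ B := by
    intro k hk
    rcases main1 k with h | h
    · exact h
    · exfalso
      have hlt : γ / Δ < (l : ℝ) := by
        rw [hl]; push_cast; exact Nat.lt_floor_add_one _
      have h1 : γ < l * Δ := by
        rw [div_lt_iff₀ hΔ] at hlt; linarith
      have h2 : (l : ℝ) * Δ ≤ (k : ℝ) * Δ :=
        mul_le_mul_of_nonneg_right (Nat.cast_le.2 hk) hΔ.le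
      have := abs_nonneg (x k)
      linarith
  refine ⟨⟨l, le_refl _, hlγ⟩, ?_⟩
  -- limsup part
  have hcob : IsCoboundedUnder (· ≤ ·) atTop (fun k : ℕ => |x k|) := by
    refine Filter.IsBoundedUnder.isCoboundedUnder_le ?_
    exact isBoundedUnder_of ⟨0, fun k => abs_nonneg _⟩
  refine le_of_forall_pos_le_add ?_
  intro η hη
  set η' : ℝ := min η (B - B₂) with hη'
  have hη'pos : 0 < η' := lt_min hη (by linarith)
  have hη'le : η' ≤ B - B₂ := min_le_right _ _
  have hη'η : η' ≤ η := min_le_left _ _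
  set c : ℝ := B₂ + η' with hc
  have hcB : c ≤ B := by rw [hc]; linarith
  have hcB₂ : B₂ < c := by rw [hc]; linarith
  have hclt : c < ε := by linarith
  have hρ0 : δb < c / (ε - c) := by
    have hq : 0 < ε - c := by linarith
    rw [lt_div_iff₀ hq]
    nlinarith [hBid, mul_lt_mul_of_pos_left hcB₂ hd1]
  set ρ : ℝ := g₁ * τ * (c / (ε - c) - δb) with hρdef
  have hρ : 0 < ρ := by
    rw [hρdef]
    have hgt : 0 < g₁ * τ := by positivity
    nlinarith
  have claim : ∀ j : ℕ, |x (l + j)| ≤ max c (B - j * ρ) := by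
    intro j
    induction j with
    | zero =>
      have := hlγ l le_rfl
      have he : B - (0 : ℕ) * ρ = B := by push_cast; ring
      rw [he]
      exact this.trans (le_max_right _ _)
    | succ j ih =>
      have hjρ : 0 ≤ (j : ℝ) * ρ := by positivity
      have hmB : max c (B - j * ρ) ≤ B := max_le hcB (by linarith)
      have hxm : |x (l + j)| ≤ B := ih.trans hmB
      have hs := stepI (l + j) hxm
      have hidx : l + (j + 1) = (l + j) + 1 := by ring
      rw [hidx]
      by_cases h1 : |x (l + j)| ≤ B₂
      · refine (hs.2.1 h1).trans ?_
        refine le_trans (by linarith : B₂ ≤ c) (le_max_left _ _)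
      · push_neg at h1
        have h3 := hs.2.2 h1
        have hd0 : 0 ≤ g₁ * τ * (|x (l + j)| / (ε - |x (l + j)|) - δb) := by
          have := hdlb (|x (l + j)|) h1.le hxm
          have : 0 ≤ g₁ * τ := by positivity
          nlinarith [hdlb (|x (l + j)|) h1.le hxm]
        by_cases h2 : |x (l + j)| ≤ c
        · refine h3.trans ?_
          refine max_le (le_trans (by linarith : B₂ ≤ c) (le_max_left _ _)) ?_
          refine le_trans (by linarith : |x (l + j)| - _ ≤ c) (le_max_left _ _)
        · push_neg at h2
          have h4 : |x (l + j)| ≤ B - j * ρ := by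
            rcases le_total (|x (l + j)|) c with hcc | hcc
            · linarith
            · rcases max_cases c (B - j * ρ) with ⟨hm, hm2⟩ | ⟨hm, hm2⟩
              · rw [hm] at ih; linarith
              · rw [hm] at ih; exact ih
          have hρd : ρ ≤ g₁ * τ * (|x (l + j)| / (ε - |x (l + j)|) - δb) := by
            rw [hρdef]
            have hmm := hmono c (|x (l + j)|) (by linarith) h2.le hxm
            have : 0 ≤ g₁ * τ := by positivity
            nlinarith
          refine h3.trans (max_le (le_trans (by linarith : B₂ ≤ c) (le_max_left _ _)) ?_)
          refine le_trans ?_ (le_max_right c (B - (j + 1 : ℕ) * ρ))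
          push_cast
          linarith
  obtain ⟨J, hJ⟩ := exists_nat_ge ((B - c) / ρ)
  have hev : ∀ᶠ k in atTop, |x k| ≤ c := by
    refine eventually_atTop.2 ⟨l + J, fun k hk => ?_⟩
    have hlk : l ≤ k := le_trans (Nat.le_add_right l J) hk
    have h5 := claim (k - l)
    rw [Nat.add_sub_cancel' hlk] at h5
    have hJk : (J : ℝ) ≤ ((k - l : ℕ) : ℝ) := Nat.cast_le.2 (by omega)
    have hJρ : B - c ≤ (J : ℝ) * ρ := by
      rw [div_le_iff₀ hρ] at hJ; linarith
    have h6 : B - ((k - l : ℕ) : ℝ) * ρ ≤ c := by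
      have := mul_le_mul_of_nonneg_right hJk hρ.le
      linarith
    exact h5.trans (max_le le_rfl h6)
  have hls : limsup (fun k : ℕ => |x k|) atTop ≤ c := limsup_le_of_le hcob hev
  rw [hc] at hls
  linarith
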